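/- arXiv:1001.4427 — 2 statements merged into one kernel-verified Lean document; each statement's English description precedes it below -/
import Mathlib

section
/- Given an abstract strategy ζ over an ARS consisting only of finite derivations, there exists a memoryless intensional strategy λ whose finite support of extension equals ζ if and only if ζ is factor-closed and closed under composition. -/
/-- A step of an abstract reduction system: (source, label, target). -/
abbrev Step (O L : Type) := O × L × O

/-- A list of steps forms a derivation when consecutive steps are composable. -/
def ChainOK {O L : Type} (l : List (Step O L)) : Prop :=
  List.Chain' (fun s t => t.1 = s.2.2) l

/-- `Γ` is a functional relation. -/
def FunctionalARS {O L : Type} (Γ : Set (Step O L)) : Prop :=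
  ∀ a φ b₁ b₂, (a, φ, b₁) ∈ Γ → (a, φ, b₂) ∈ Γ → b₁ = b₂

/-- The trace (history) associated with a finite derivation. -/
def histL {O L : Type} (l : List (Step O L)) : List (O × L) :=
  l.map fun s => (s.1, s.2.1)

/-- Two finite derivations are composable. -/
def Composable {O L : Type} (l₁ l₂ : List (Step O L)) : Prop :=
  l₁ = [] ∨ l₂ = [] ∨
    ∃ s t, l₁.getLast? = some s ∧ l₂.head? = some t ∧ t.1 = s.2.2

/-- ζ is factor-closed: every non-empty contiguous factor of a member is a
member. -/
def FactorClosed {O L : Type} (ζ : Set (List (Step O L))) : Prop :=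
  ∀ l ∈ ζ, ∀ l₁ l₂ l₃ : List (Step O L), l = l₁ ++ l₂ ++ l₃ → l₂ ≠ [] → l₂ ∈ ζ

/-- ζ is closed under composition of composable members. -/
def CompClosed {O L : Type} (ζ : Set (List (Step O L))) : Prop :=
  ∀ l₁ ∈ ζ, ∀ l₂ ∈ ζ, Composable l₁ l₂ → l₁ ++ l₂ ∈ ζ

/-- The finite support of the extension of a memoryless intensional strategy:
all finite non-empty derivations all of whose steps obey λ. -/
def FinMExt {O L : Type} (lam : O → Set (Step O L)) : Set (List (Step O L)) :=
  {l | l ≠ [] ∧ ChainOK l ∧ ∀ s ∈ l, s ∈ lam s.1}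

/-- an abstract strategy ζ consisting of finite derivations is the
finite support of the extension of some memoryless intensional strategy iff ζ
is factor-closed and closed under composition. -/
theorem memoryless_iff_factor_and_composition_closed
    (O L : Type) (Γ : Set (Step O L)) (hΓ : FunctionalARS Γ)
    (ζ : Set (List (Step O L)))
    (hζ : ∀ l ∈ ζ, l ≠ [] ∧ ChainOK l ∧ ∀ s ∈ l, s ∈ Γ) :
    (∃ lam : O → Set (Step O L),
        (∀ a s, s ∈ lam a → s.1 = a ∧ s ∈ Γ) ∧ FinMExt lam = ζ)
      ↔ FactorClosed ζ ∧ CompClosed ζ := by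
  constructor
  · rintro ⟨lam, hlam, rfl⟩
    constructor
    · rintro l ⟨-, hch, hstep⟩ l₁ l₂ l₃ rfl h₂
      refine ⟨h₂, hch.infix ⟨l₁, l₃, rfl⟩, fun s hs => hstep s ?_⟩
      simp [hs]
    · rintro l₁ ⟨h₁ne, h₁ch, h₁s⟩ l₂ ⟨h₂ne, h₂ch, h₂s⟩ hcomp
      refine ⟨by simp [h₁ne], ?_, fun s hs => ?_⟩
      · rw [ChainOK, List.Chain', List.isChain_append]
        refine ⟨h₁ch, h₂ch, fun x hx y hy => ?_⟩
        rcases hcomp with h | h | ⟨s, t, hs, ht, hst⟩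
        · exact absurd h h₁ne
        · exact absurd h h₂ne
        · rw [hs] at hx; rw [ht] at hy
          cases hx; cases hy; exact hst
      · rcases List.mem_append.1 hs with h | h
        · exact h₁s s h
        · exact h₂s s h
  · rintro ⟨hFC, hCC⟩
    refine ⟨fun a => {s | s.1 = a ∧ [s] ∈ ζ}, fun a s hs => ⟨hs.1, (hζ _ hs.2).2.2 s (by simp)⟩, ?_⟩
    have hsingle : ∀ l ∈ ζ, ∀ s ∈ l, [s] ∈ ζ := by
      intro l hl s hs
      obtain ⟨l₁, l₃, rfl⟩ := List.append_of_mem hs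
      exact hFC _ hl l₁ [s] l₃ (by simp) (by simp)
    ext l
    constructor
    · rintro ⟨hne, hch, hstep⟩
      induction l with
      | nil => exact absurd rfl hne
      | cons s rest ih =>
        rcases rest with _ | ⟨t, rest'⟩
        · exact (hstep s (by simp)).2
        · have hrest : (t :: rest') ∈ ζ := by
            refine ih (by simp) hch.tail (fun x hx => hstep x (by simp [hx]))
          have hs : [s] ∈ ζ := (hstep s (by simp)).2
          have := hCC [s] hs (t :: rest') hrest
            (Or.inr (Or.inr ⟨s, t, rfl, rfl, (List.isChain_cons_cons.1 hch).1⟩))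
          simpa using this
    · intro hl
      obtain ⟨hne, hch, -⟩ := hζ l hl
      exact ⟨hne, hch, fun s hs => ⟨rfl, hsingle l hl s hs⟩⟩
end

section
/- Given an abstract strategy ζ over an ARS consisting only of finite derivations, there exists an intensional strategy with memory λ whose finite support of extension equals ζ if and only if ζ is prefix-closed. -/
/-- The finite support of the extension of an intensional strategy with
memory: all finite non-empty derivations each of whose steps obeys λ applied to
the trace of the preceding steps. -/
def FinExt {O L : Type} (lam : List (O × L) → O → Set (Step O L)) :
    Set (List (Step O L)) :=
  {l | l ≠ [] ∧ ChainOK l ∧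
    ∀ i, ∀ h : i < l.length, l.get ⟨i, h⟩ ∈ lam (histL (l.take i)) (l.get ⟨i, h⟩).1}

/-- ζ is closed under non-empty prefixes. -/
def PrefixClosedL {O L : Type} (ζ : Set (List (Step O L))) : Prop :=
  ∀ l ∈ ζ, ∀ p : List (Step O L), p ≠ [] → p <+: l → p ∈ ζ

lemma histL_uniq {O L : Type} {Γ : Set (Step O L)} (hΓ : FunctionalARS Γ) :
    ∀ (l m : List (Step O L)), histL l = histL m → (∀ s ∈ l, s ∈ Γ) →
      (∀ s ∈ m, s ∈ Γ) → l = m := by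
  intro l
  induction l with
  | nil => intro m h _ _; simpa [histL] using (List.map_eq_nil_iff.mp h.symm).symm
  | cons s l ih =>
    intro m h hl hm
    cases m with
    | nil => simp [histL] at h
    | cons t m =>
      obtain ⟨a, φ, b⟩ := s
      obtain ⟨a', φ', b'⟩ := t
      simp only [histL, List.map_cons, List.cons.injEq, Prod.mk.injEq] at h
      obtain ⟨⟨h1, h2⟩, h3⟩ := h
      subst h1; subst h2
      have hb : b = b' := hΓ a φ b b' (hl _ (by simp)) (hm _ (by simp))
      subst hb
      have := ih m h3 (fun x hx => hl x (by simp [hx])) (fun x hx => hm x (by simp [hx]))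
      simp [this]

lemma histL_take_succ {O L : Type} (l : List (Step O L)) (i : ℕ) (h : i < l.length) :
    histL (l.take (i + 1)) =
      histL (l.take i) ++ [((l.get ⟨i, h⟩).1, (l.get ⟨i, h⟩).2.1)] := by
  simp only [histL, ← List.map_take, ← List.take_concat_get h,
    List.concat_eq_append, List.map_append]
  simp

/-- an abstract strategy ζ consisting of finite derivations is the
finite support of the extension of some intensional strategy with memory iff ζ
is prefix-closed. -/
theorem with_memory_iff_prefix_closed
    (O L : Type) (Γ : Set (Step O L)) (hΓ : FunctionalARS Γ)
    (ζ : Set (List (Step O L)))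
    (hζ : ∀ l ∈ ζ, l ≠ [] ∧ ChainOK l ∧ ∀ s ∈ l, s ∈ Γ) :
    (∃ lam : List (O × L) → O → Set (Step O L),
        (∀ α a s, s ∈ lam α a → s.1 = a ∧ s ∈ Γ) ∧ FinExt lam = ζ)
      ↔ PrefixClosedL ζ := by
  constructor
  · rintro ⟨lam, hsrc, rfl⟩
    intro l hl p hp hpre
    obtain ⟨hne, hch, hstep⟩ := hl
    obtain ⟨t, rfl⟩ := hpre
    refine ⟨hp, hch.prefix ⟨t, rfl⟩, ?_⟩
    intro i h
    have hlen : i < (p ++ t).length := by simp; omega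
    have hget : p.get ⟨i, h⟩ = (p ++ t).get ⟨i, hlen⟩ := by
      simp [List.getElem_append_left h]
    have htake : p.take i = (p ++ t).take i :=
      (List.take_append_of_le_length (le_of_lt h)).symm
    rw [hget, htake]
    exact hstep i hlen
  · intro hpc
    refine ⟨fun α a => {s | s.1 = a ∧ s ∈ Γ ∧ ∃ m ∈ ζ, histL m = α ++ [(a, s.2.1)]},
      fun α a s hs => ⟨hs.1, hs.2.1⟩, ?_⟩
    ext l
    constructor
    · rintro ⟨hne, hch, hstep⟩
      have hlpos : 0 < l.length := List.length_pos_iff.mpr hne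
      have hlΓ : ∀ s ∈ l, s ∈ Γ := by
        intro s hs
        obtain ⟨⟨i, hi⟩, rfl⟩ := List.mem_iff_get.mp hs
        exact (hstep i hi).2.1
      have hn : l.length - 1 < l.length := by omega
      obtain ⟨hsrc, _, m, hmζ, hm⟩ := hstep (l.length - 1) hn
      have hhist : histL m = histL l := by
        rw [hm, hsrc, ← histL_take_succ l (l.length - 1) hn]
        have h1 : l.length - 1 + 1 = l.length := by omega
        rw [h1, List.take_length]
      have : l = m := histL_uniq hΓ l m hhist.symm hlΓ (hζ m hmζ).2.2
      rw [this]; exact hmζ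
    · intro hl
      obtain ⟨hne, hch, hlΓ⟩ := hζ l hl
      refine ⟨hne, hch, ?_⟩
      intro i h
      refine ⟨rfl, hlΓ _ (l.get_mem ⟨i, h⟩), l.take (i + 1), ?_, ?_⟩
      · refine hpc l hl _ ?_ (List.take_prefix _ _)
        have : (l.take (i + 1)).length = i + 1 := by
          rw [List.length_take]; omega
        intro hcontra
        rw [hcontra] at this
        simp at this
      · exact histL_take_succ l i h
end
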